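/- arXiv:1704.01866 — 6 statements merged into one kernel-verified Lean document; each statement's English description precedes it below -/
import Mathlib

section
/- For any intuitionistic Kripke model M = ⟨W,R,V⟩, any team t ⊆ W, and any standard formula φ (a formula containing no inquisitive disjunction ⩾), we have: M,t ⊨ φ if and only if M,w ⊨ φ for every world w ∈ t. That is, every standard formula is truth-conditional. -/
/-- Formulas of the language L: atoms, ⊥, ∧, ∨, →, and inquisitive disjunction ⩾. -/
inductive Formula (P : Type) : Type
  | atom : P → Formula P
  | bot  : Formula P
  | and  : Formula P → Formula P → Formula P
  | or   : Formula P → Formula P → Formula P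
  | impl : Formula P → Formula P → Formula P
  | iorr : Formula P → Formula P → Formula P

namespace Formula

/-- Negation ¬φ := φ → ⊥. -/
def neg {P : Type} (φ : Formula P) : Formula P := Formula.impl φ Formula.bot

/-- Polar question ?φ := φ ⩾ ¬φ. -/
def question {P : Type} (φ : Formula P) : Formula P := Formula.iorr φ φ.neg

/-- A standard formula contains no occurrence of inquisitive disjunction ⩾. -/
def standard {P : Type} : Formula P → Prop
  | atom _ => True
  | bot => True
  | and φ ψ => φ.standard ∧ ψ.standard
  | or φ ψ => φ.standard ∧ ψ.standard
  | impl φ ψ => φ.standard ∧ ψ.standard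
  | iorr _ _ => False

end Formula

/-- An intuitionistic Kripke model: a partially ordered set of worlds with a
persistent valuation. -/
structure KripkeModel (P : Type) where
  W : Type
  R : W → W → Prop
  refl : ∀ w, R w w
  antisymm : ∀ w v, R w v → R v w → w = v
  trans : ∀ w v u, R w v → R v u → R w u
  V : W → P → Prop
  persistent : ∀ w v p, R w v → V w p → V v p

/-- R[t], the up-set generated by a team t. -/
def KripkeModel.upset {P : Type} (M : KripkeModel P) (t : Set M.W) : Set M.W :=
  {v | ∃ w ∈ t, M.R w v}

/-- The support relation M,t ⊨ φ between teams and formulas. -/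
def support {P : Type} (M : KripkeModel P) : Formula P → Set M.W → Prop
  | .atom p, t => ∀ w ∈ t, M.V w p
  | .bot, t => t = ∅
  | .and φ ψ, t => support M φ t ∧ support M ψ t
  | .or φ ψ, t => ∃ t₁ t₂, t = t₁ ∪ t₂ ∧ support M φ t₁ ∧ support M ψ t₂
  | .impl φ ψ, t => ∀ t', t' ⊆ M.upset t → support M φ t' → support M ψ t'
  | .iorr φ ψ, t => support M φ t ∨ support M ψ t

/-- Truth at a world: M,w ⊨ φ iff M,{w} ⊨ φ. -/
def truth {P : Type} (M : KripkeModel P) (w : M.W) (φ : Formula P) : Prop :=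
  support M φ {w}

/-- A formula is truth-conditional if support at a team amounts to truth at each world. -/
def truthConditional {P : Type} (φ : Formula P) : Prop :=
  ∀ (M : KripkeModel P) (t : Set M.W), support M φ t ↔ ∀ w ∈ t, truth M w φ

/-- The partial truth-value function: `tvalIs M w φ b` says T(w,φ) is defined with value b
(b = true for value 1, i.e. M,w ⊨ φ; b = false for value 0, i.e. M,w ⊨ ¬φ). -/
def tvalIs {P : Type} (M : KripkeModel P) (w : M.W) (φ : Formula P) : Bool → Prop
  | true => truth M w φ
  | false => truth M w φ.neg

theorem upset_mono {P : Type} (M : KripkeModel P) {t t' : Set M.W} (h : t' ⊆ t) :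
    M.upset t' ⊆ M.upset t := by
  rintro v ⟨w, hw, hR⟩; exact ⟨w, h hw, hR⟩

theorem support_mono {P : Type} (M : KripkeModel P) (φ : Formula P) :
    ∀ t t' : Set M.W, t' ⊆ t → support M φ t → support M φ t' := by
  induction φ with
  | atom p => intro t t' h hs w hw; exact hs w (h hw)
  | bot => intro t t' h hs; subst hs; exact Set.subset_eq_empty h rfl
  | and φ ψ ihφ ihψ => intro t t' h hs; exact ⟨ihφ t t' h hs.1, ihψ t t' h hs.2⟩
  | or φ ψ ihφ ihψ =>
    rintro t t' h ⟨t₁, t₂, rfl, h₁, h₂⟩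
    refine ⟨t' ∩ t₁, t' ∩ t₂, ?_,
      ihφ t₁ _ Set.inter_subset_right h₁, ihψ t₂ _ Set.inter_subset_right h₂⟩
    ext w
    constructor
    · intro hw
      rcases h hw with hw1 | hw2
      · exact Or.inl ⟨hw, hw1⟩
      · exact Or.inr ⟨hw, hw2⟩
    · rintro (⟨hw, _⟩ | ⟨hw, _⟩) <;> exact hw
  | impl φ ψ ihφ ihψ =>
    intro t t' h hs t'' ht'' hφ
    exact hs t'' (ht''.trans (upset_mono M h)) hφ
  | iorr φ ψ ihφ ihψ =>
    rintro t t' h (hs | hs)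
    · exact Or.inl (ihφ t t' h hs)
    · exact Or.inr (ihψ t t' h hs)

/-- every standard formula is truth-conditional. -/
theorem standard_formulas_truthConditional {P : Type} (M : KripkeModel P)
    (t : Set M.W) (φ : Formula P) (hφ : φ.standard) :
    support M φ t ↔ ∀ w ∈ t, truth M w φ := by
  constructor
  · intro hs w hw
    exact support_mono M φ t {w} (by simpa using hw) hs
  · induction φ generalizing t with
    | atom p =>
      intro h w hw
      exact h w hw w rfl
    | bot =>
      intro h
      ext w
      simp only [Set.mem_empty_iff_false, iff_false]
      intro hw
      have : ({w} : Set M.W) = ∅ := h w hw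
      simp at this
    | and φ ψ ihφ ihψ =>
      intro h
      exact ⟨ihφ t hφ.1 (fun w hw => (h w hw).1),
             ihψ t hφ.2 (fun w hw => (h w hw).2)⟩
    | or φ ψ ihφ ihψ =>
      intro h
      refine ⟨{w ∈ t | truth M w φ}, {w ∈ t | truth M w ψ}, ?_, ?_, ?_⟩
      · ext w
        constructor
        · intro hw
          obtain ⟨t₁, t₂, he, h₁, h₂⟩ := h w hw
          have hw1 : w ∈ t₁ ∪ t₂ := by rw [← he]; rfl
          rcases hw1 with hw1 | hw2
          · exact Or.inl ⟨hw, support_mono M φ t₁ {w} (by simpa using hw1) h₁⟩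
          · exact Or.inr ⟨hw, support_mono M ψ t₂ {w} (by simpa using hw2) h₂⟩
        · rintro (⟨hw, _⟩ | ⟨hw, _⟩) <;> exact hw
      · exact ihφ _ hφ.1 (fun w hw => hw.2)
      · exact ihψ _ hφ.2 (fun w hw => hw.2)
    | impl φ ψ ihφ ihψ =>
      intro h t' ht' hφt'
      refine ihψ t' hφ.2 (fun v hv => ?_)
      obtain ⟨w, hw, hR⟩ := ht' hv
      have hvw : ({v} : Set M.W) ⊆ M.upset {w} := by
        intro x hx
        rcases hx with rfl
        exact ⟨w, rfl, hR⟩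
      exact h w hw {v} hvw (support_mono M φ t' {v} (by simpa using hv) hφt')
    | iorr φ ψ ihφ ihψ =>
      exact absurd hφ (by simp [Formula.standard])
end

section
/- Support conditions for polar questions: for any intuitionistic Kripke model M, team t, and standard formula α: M,t ⊨ ?α if and only if for all w,w' ∈ t, the truth-values T(w,α) and T(w',α) are both defined and equal. -/
lemma forall_mem_singleton' {W : Type} {w : W} {Q : W → Prop} :
    (∀ v ∈ ({w} : Set W), Q v) ↔ Q w :=
  ⟨fun h => h w rfl, fun h v hv => by rw [Set.mem_singleton_iff.1 hv]; exact h⟩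

lemma standard_flat {P : Type} (α : Formula P) (hα : α.standard) (M : KripkeModel P)
    (t : Set M.W) : support M α t ↔ ∀ w ∈ t, truth M w α := by
  induction α generalizing t with
  | atom p =>
      simp only [support, truth, forall_mem_singleton']
  | bot =>
      simp only [support, truth]
      constructor
      · rintro rfl w hw; cases hw
      · intro h; ext w; simp only [Set.mem_empty_iff_false, iff_false]
        intro hw; exact Set.singleton_ne_empty w (h w hw)
  | and φ ψ ihφ ihψ =>
      obtain ⟨h1, h2⟩ := hα
      constructor
      · rintro ⟨a, b⟩ w hw
        exact ⟨(ihφ h1 {w}).2 (forall_mem_singleton'.2 ((ihφ h1 t).1 a w hw)),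
               (ihψ h2 {w}).2 (forall_mem_singleton'.2 ((ihψ h2 t).1 b w hw))⟩
      · intro h
        exact ⟨(ihφ h1 t).2 (fun w hw => (h w hw).1),
               (ihψ h2 t).2 (fun w hw => (h w hw).2)⟩
  | or φ ψ ihφ ihψ =>
      obtain ⟨h1, h2⟩ := hα
      constructor
      · rintro ⟨t₁, t₂, rfl, s1, s2⟩ w hw
        rcases hw with hw | hw
        · exact ⟨{w}, ∅, by simp,
            (ihφ h1 {w}).2 (forall_mem_singleton'.2 ((ihφ h1 t₁).1 s1 w hw)),
            (ihψ h2 ∅).2 (fun v hv => hv.elim)⟩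
        · exact ⟨∅, {w}, by simp, (ihφ h1 ∅).2 (fun v hv => hv.elim),
            (ihψ h2 {w}).2 (forall_mem_singleton'.2 ((ihψ h2 t₂).1 s2 w hw))⟩
      · intro h
        have key : ∀ w ∈ t, truth M w φ ∨ truth M w ψ := by
          intro w hw
          obtain ⟨s₁, s₂, hs, a1, a2⟩ := h w hw
          have : w ∈ s₁ ∪ s₂ := hs ▸ rfl
          rcases this with hw1 | hw1
          · exact Or.inl ((ihφ h1 s₁).1 a1 w hw1)
          · exact Or.inr ((ihψ h2 s₂).1 a2 w hw1)
        refine ⟨{w ∈ t | truth M w φ}, {w ∈ t | truth M w ψ}, ?_, ?_, ?_⟩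
        · ext w
          simp only [Set.mem_union, Set.mem_setOf_eq]
          constructor
          · intro hw; rcases key w hw with h' | h'
            · exact Or.inl ⟨hw, h'⟩
            · exact Or.inr ⟨hw, h'⟩
          · rintro (⟨hw, _⟩ | ⟨hw, _⟩) <;> exact hw
        · exact (ihφ h1 _).2 (fun w hw => hw.2)
        · exact (ihψ h2 _).2 (fun w hw => hw.2)
  | impl φ ψ ihφ ihψ =>
      obtain ⟨h1, h2⟩ := hα
      constructor
      · intro h w hw t' ht' hφ
        refine h t' (fun v hv => ?_) hφ
        obtain ⟨u, hu, hru⟩ := ht' hv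
        exact ⟨w, hw, hu ▸ hru⟩
      · intro h t' ht' hφ
        refine (ihψ h2 t').2 (fun v hv => ?_)
        obtain ⟨w, hw, hrw⟩ := ht' hv
        exact h w hw {v} (Set.singleton_subset_iff.2 ⟨w, rfl, hrw⟩)
          ((ihφ h1 {v}).2 (forall_mem_singleton'.2 ((ihφ h1 t').1 hφ v hv)))
  | iorr φ ψ _ _ => cases hα

/-- support conditions for polar questions: M,t ⊨ ?α iff for all
w, w' ∈ t the truth-values T(w,α) and T(w',α) are both defined and equal. -/
theorem polar_question_support {P : Type} (M : KripkeModel P) (t : Set M.W)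
    (α : Formula P) (hα : α.standard) :
    support M α.question t ↔
      ∀ w ∈ t, ∀ w' ∈ t, ∃ b : Bool, tvalIs M w α b ∧ tvalIs M w' α b := by
  have hneg : (Formula.neg α).standard := ⟨hα, trivial⟩
  have flatα := standard_flat α hα M
  have flatn := standard_flat α.neg hneg M
  have notboth : ∀ w : M.W, truth M w α → truth M w α.neg → False := by
    intro w h1 h2
    have := h2 {w} (fun v hv => ⟨w, Set.mem_singleton_iff.1 hv ▸ rfl, by
      rw [Set.mem_singleton_iff.1 hv]; exact M.refl w⟩) h1
    exact Set.singleton_ne_empty w this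
  constructor
  · rintro (h | h) w hw w' hw'
    · exact ⟨true, (flatα t).1 h w hw, (flatα t).1 h w' hw'⟩
    · exact ⟨false, (flatn t).1 h w hw, (flatn t).1 h w' hw'⟩
  · intro h
    rcases Set.eq_empty_or_nonempty t with rfl | ⟨w₀, hw₀⟩
    · exact Or.inl ((flatα ∅).2 (fun w hw => hw.elim))
    · obtain ⟨b₀, hb₀, -⟩ := h w₀ hw₀ w₀ hw₀
      have same : ∀ w ∈ t, tvalIs M w α b₀ := by
        intro w hw
        obtain ⟨b, hb1, hb2⟩ := h w₀ hw₀ w hw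
        cases b <;> cases b₀
        · exact hb2
        · exact absurd hb₀ (fun h' => notboth w₀ h' hb1)
        · exact absurd hb₀ (fun h' => notboth w₀ hb1 h')
        · exact hb2
      cases b₀
      · exact Or.inr ((flatn t).2 (fun w hw => same w hw))
      · exact Or.inl ((flatα t).2 (fun w hw => same w hw))
end

section
/- Characterization of dependency: for any intuitionistic Kripke model M, team t, and atomic propositions p, q: M,t ⊨ ?p → ?q if and only if for all w,w' ∈ R[t], if T(w,p) and T(w',p) are both defined and equal, then T(w,q) and T(w',q) are both defined and equal. -/
lemma suppAtom {P : Type} (M : KripkeModel P) (r : P) (s : Set M.W) :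
    support M (Formula.atom r) s ↔ ∀ w ∈ s, M.V w r := Iff.rfl

lemma suppNegAtom {P : Type} (M : KripkeModel P) (r : P) (s : Set M.W) :
    support M (Formula.atom r).neg s ↔ ∀ v ∈ M.upset s, ¬ M.V v r := by
  constructor
  · intro h v hv hV
    have h1 : ({v} : Set M.W) ⊆ M.upset s := by
      intro x hx; simp only [Set.mem_singleton_iff] at hx; subst hx; exact hv
    have h2 : support M (Formula.atom r) {v} := by
      intro w hw; simp only [Set.mem_singleton_iff] at hw; subst hw; exact hV
    exact Set.singleton_ne_empty v (h {v} h1 h2)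
  · intro h t'' hsub hq
    show t'' = ∅
    ext x
    simp only [Set.mem_empty_iff_false, iff_false]
    intro hx
    exact h x (hsub hx) (hq x hx)

lemma mem_upset_singleton {P : Type} (M : KripkeModel P) (w v : M.W) :
    v ∈ M.upset {w} ↔ M.R w v := by
  constructor
  · rintro ⟨u, hu, hR⟩
    simp only [Set.mem_singleton_iff] at hu; subst hu; exact hR
  · intro h; exact ⟨w, rfl, h⟩

lemma truthNegAtom {P : Type} (M : KripkeModel P) (r : P) (w : M.W) :
    truth M w (Formula.atom r).neg ↔ ∀ v, M.R w v → ¬ M.V v r := by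
  rw [truth, suppNegAtom]
  constructor
  · intro h v hv; exact h v ((mem_upset_singleton M w v).2 hv)
  · intro h v hv; exact h v ((mem_upset_singleton M w v).1 hv)

lemma truthAtom {P : Type} (M : KripkeModel P) (r : P) (w : M.W) :
    truth M w (Formula.atom r) ↔ M.V w r := by
  rw [truth, suppAtom]
  constructor
  · intro h; exact h w rfl
  · intro h v hv; simp only [Set.mem_singleton_iff] at hv; subst hv; exact h

lemma mem_upset_pair {P : Type} (M : KripkeModel P) (w w' v : M.W) :
    v ∈ M.upset {w, w'} ↔ M.R w v ∨ M.R w' v := by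
  constructor
  · rintro ⟨u, hu, hR⟩
    rcases hu with rfl | hu
    · exact Or.inl hR
    · simp only [Set.mem_singleton_iff] at hu; subst hu; exact Or.inr hR
  · rintro (h | h)
    · exact ⟨w, Or.inl rfl, h⟩
    · exact ⟨w', Or.inr rfl, h⟩

/-- characterization of dependency: M,t ⊨ ?p → ?q iff for all
w, w' ∈ R[t], T(w,p) ≐ T(w',p) implies T(w,q) ≐ T(w',q). -/
theorem dependency_characterization {P : Type} (M : KripkeModel P) (t : Set M.W)
    (p q : P) :
    support M (Formula.impl (Formula.atom p).question (Formula.atom q).question) t ↔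
      ∀ w ∈ M.upset t, ∀ w' ∈ M.upset t,
        (∃ b : Bool, tvalIs M w (Formula.atom p) b ∧ tvalIs M w' (Formula.atom p) b) →
        (∃ b : Bool, tvalIs M w (Formula.atom q) b ∧ tvalIs M w' (Formula.atom q) b) := by
  have excl : ∀ (r : P) (w : M.W) (b b' : Bool),
      tvalIs M w (Formula.atom r) b → tvalIs M w (Formula.atom r) b' → b = b' := by
    intro r w b b' h1 h2
    cases b <;> cases b' <;> try rfl
    · exact absurd ((truthAtom M r w).1 h2) ((truthNegAtom M r w).1 h1 w (M.refl w))
    · exact absurd ((truthAtom M r w).1 h1) ((truthNegAtom M r w).1 h2 w (M.refl w))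
  constructor
  · intro h w hw w' hw' ⟨b, hb, hb'⟩
    have hs : ({w, w'} : Set M.W) ⊆ M.upset t := by
      rintro x (rfl | hx)
      · exact hw
      · simp only [Set.mem_singleton_iff] at hx; subst hx; exact hw'
    have hsupp : support M (Formula.atom p).question {w, w'} := by
      cases b with
      | true =>
        exact Or.inl (by
          rintro v (rfl | hv)
          · exact (truthAtom M p v).1 hb
          · simp only [Set.mem_singleton_iff] at hv; subst hv
            exact (truthAtom M p v).1 hb')
      | false =>
        refine Or.inr ((suppNegAtom M p _).2 ?_)
        intro v hv
        rcases (mem_upset_pair M w w' v).1 hv with hr | hr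
        · exact (truthNegAtom M p w).1 hb v hr
        · exact (truthNegAtom M p w').1 hb' v hr
    rcases h {w, w'} hs hsupp with hq | hq
    · refine ⟨true, (truthAtom M q w).2 (hq w (Or.inl rfl)),
        (truthAtom M q w').2 (hq w' (Or.inr rfl))⟩
    · rw [suppNegAtom] at hq
      refine ⟨false, (truthNegAtom M q w).2 fun v hv =>
          hq v ((mem_upset_pair M w w' v).2 (Or.inl hv)),
        (truthNegAtom M q w').2 fun v hv =>
          hq v ((mem_upset_pair M w w' v).2 (Or.inr hv))⟩
  · intro h t' hsub hp
    rcases Set.eq_empty_or_nonempty t' with rfl | ⟨w₀, hw₀⟩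
    · exact Or.inl (fun w hw => absurd hw (Set.notMem_empty w))
    have hmem : ∀ w ∈ t', w ∈ M.upset t := fun w hw => hsub hw
    have hmatch : ∀ w ∈ t', ∃ b, tvalIs M w₀ (Formula.atom q) b ∧
        tvalIs M w (Formula.atom q) b := by
      intro w hw
      rcases hp with hp | hp
      · exact h w₀ (hmem w₀ hw₀) w (hmem w hw)
          ⟨true, (truthAtom M p w₀).2 (hp w₀ hw₀), (truthAtom M p w).2 (hp w hw)⟩
      · rw [suppNegAtom] at hp
        refine h w₀ (hmem w₀ hw₀) w (hmem w hw)
          ⟨false, (truthNegAtom M p w₀).2 fun v hv => hp v ⟨w₀, hw₀, hv⟩,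
            (truthNegAtom M p w).2 fun v hv => hp v ⟨w, hw, hv⟩⟩
    obtain ⟨b₀, hq₀, -⟩ := hmatch w₀ hw₀
    have hall : ∀ w ∈ t', tvalIs M w (Formula.atom q) b₀ := by
      intro w hw
      obtain ⟨b, h1, h2⟩ := hmatch w hw
      rwa [excl q w₀ b b₀ h1 hq₀] at h2
    cases b₀ with
    | true => exact Or.inl fun w hw => (truthAtom M q w).1 (hall w hw)
    | false =>
      refine Or.inr ((suppNegAtom M q t').2 ?_)
      rintro v ⟨w, hw, hr⟩
      exact (truthNegAtom M q w).1 (hall w hw) v hr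
end

section
/- Functional characterization of dependency: for any intuitionistic Kripke model M, team t, and atomic propositions p, q: M,t ⊨ ?p → ?q if and only if there exists a function f : {0,1} → {0,1} such that for every w ∈ R[t], if T(w,p) is defined then T(w,q) is defined and T(w,q) = f(T(w,p)). -/

lemma upset_sub {P : Type} (M : KripkeModel P) {t t' : Set M.W} (h : t' ⊆ M.upset t) :
    M.upset t' ⊆ M.upset t := by
  rintro v ⟨w, hw, hr⟩
  obtain ⟨u, hu, hr'⟩ := h hw
  exact ⟨u, hu, M.trans _ _ _ hr' hr⟩

lemma mem_upset_self {P : Type} (M : KripkeModel P) {t : Set M.W} {w : M.W} (h : w ∈ t) :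
    w ∈ M.upset t := ⟨w, h, M.refl w⟩

lemma negAtom {P : Type} (M : KripkeModel P) (p : P) (t : Set M.W) :
    support M (Formula.atom p).neg t ↔ ∀ v ∈ M.upset t, ¬ M.V v p := by
  constructor
  · intro h v hv hV
    have h1 : ({v} : Set M.W) ⊆ M.upset t := by
      intro x hx; rcases hx with rfl; exact hv
    have h2 : support M (Formula.atom p) {v} := by
      intro x hx; rcases hx with rfl; exact hV
    have := h {v} h1 h2
    simpa using congrArg (v ∈ ·) this
  · intro h t'' hsub hp
    ext v
    simp only [Set.mem_empty_iff_false, iff_false]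
    intro hv
    exact h v (hsub hv) (hp v hv)

lemma tval_atom_true {P : Type} (M : KripkeModel P) (p : P) (w : M.W) :
    tvalIs M w (Formula.atom p) true ↔ M.V w p := by
  simp [tvalIs, truth, support]

lemma tval_atom_false {P : Type} (M : KripkeModel P) (p : P) (w : M.W) :
    tvalIs M w (Formula.atom p) false ↔ ∀ v, M.R w v → ¬ M.V v p := by
  rw [show tvalIs M w (Formula.atom p) false = truth M w (Formula.atom p).neg from rfl]
  rw [truth, negAtom]
  constructor
  · intro h v hr; exact h v ⟨w, rfl, hr⟩
  · rintro h v ⟨u, rfl, hr⟩; exact h v hr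

lemma supQ {P : Type} (M : KripkeModel P) (q : P) (s : Set M.W)
    (h : support M (Formula.atom q).question s) :
    ∃ c : Bool, ∀ w ∈ s, tvalIs M w (Formula.atom q) c := by
  rcases h with h | h
  · exact ⟨true, fun w hw => (tval_atom_true M q w).2 (h w hw)⟩
  · refine ⟨false, fun w hw => (tval_atom_false M q w).2 ?_⟩
    intro v hr
    exact (negAtom M q s).1 h v ⟨w, hw, hr⟩

/-- functional characterization of dependency: M,t ⊨ ?p → ?q iff there
is f : {0,1} → {0,1} such that for every w ∈ R[t], if T(w,p) is defined then T(w,q)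
is defined and T(w,q) = f(T(w,p)). -/
theorem dependency_functional_characterization {P : Type} (M : KripkeModel P)
    (t : Set M.W) (p q : P) :
    support M (Formula.impl (Formula.atom p).question (Formula.atom q).question) t ↔
      ∃ f : Bool → Bool, ∀ w ∈ M.upset t, ∀ b : Bool,
        tvalIs M w (Formula.atom p) b → tvalIs M w (Formula.atom q) (f b) := by
  constructor
  · intro H
    set t1 : Set M.W := {w ∈ M.upset t | M.V w p} with ht1
    set t0 : Set M.W := {w ∈ M.upset t | ∀ v, M.R w v → ¬ M.V v p} with ht0
    have hs1 : t1 ⊆ M.upset t := fun w hw => hw.1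
    have hs0 : t0 ⊆ M.upset t := fun w hw => hw.1
    have hq1 : support M (Formula.atom q).question t1 :=
      H t1 hs1 (Or.inl (fun w hw => hw.2))
    have hq0 : support M (Formula.atom q).question t0 := by
      refine H t0 hs0 (Or.inr ((negAtom M p t0).2 ?_))
      rintro v ⟨w, hw, hr⟩ hV
      exact hw.2 v hr hV
    obtain ⟨c1, hc1⟩ := supQ M q t1 hq1
    obtain ⟨c0, hc0⟩ := supQ M q t0 hq0
    refine ⟨fun b => cond b c1 c0, ?_⟩
    intro w hw b hb
    cases b with
    | true => exact hc1 w ⟨hw, (tval_atom_true M p w).1 hb⟩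
    | false => exact hc0 w ⟨hw, (tval_atom_false M p w).1 hb⟩
  · rintro ⟨f, hf⟩ t' hsub hpq
    have key : ∀ c : Bool, (∀ w ∈ t', tvalIs M w (Formula.atom q) c) →
        support M (Formula.atom q).question t' := by
      intro c hc
      cases c with
      | true => exact Or.inl (fun w hw => (tval_atom_true M q w).1 (hc w hw))
      | false =>
        refine Or.inr ((negAtom M q t').2 ?_)
        rintro v ⟨w, hw, hr⟩
        exact (tval_atom_false M q w).1 (hc w hw) v hr
    rcases hpq with hp | hnp
    · refine key (f true) ?_
      intro w hw
      exact hf w (hsub hw) true ((tval_atom_true M p w).2 (hp w hw))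
    · refine key (f false) ?_
      intro w hw
      refine hf w (hsub hw) false ((tval_atom_false M p w).2 ?_)
      intro v hr
      exact (negAtom M p t').1 hnp v ⟨w, hw, hr⟩
end

section
/- Disjunction property for ∨: for any formulas φ, ψ of L, if φ∨ψ is valid in InqI (supported by every team in every intuitionistic Kripke model), then φ is valid or ψ is valid. -/
/-- The empty team supports every formula. -/
lemma support_empty {P : Type} (M : KripkeModel P) (χ : Formula P) :
    support M χ (∅ : Set M.W) := by
  induction χ with
  | atom p => intro w hw; exact absurd hw (Set.notMem_empty w)
  | bot => rfl
  | and α β ih1 ih2 => exact ⟨ih1, ih2⟩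
  | or α β ih1 ih2 => exact ⟨∅, ∅, by simp, ih1, ih2⟩
  | impl α β ih1 ih2 =>
      intro t' ht' _
      have hup : M.upset (∅ : Set M.W) = ∅ := by
        ext v; simp [KripkeModel.upset]
      have : t' = ∅ := Set.subset_eq_empty (hup ▸ ht') rfl
      simpa [this] using ih2
  | iorr α β ih1 ih2 => exact Or.inl ih1

/-- Generated submodel lemma: support transfers along an embedding onto an
upward-closed part of a model. -/
lemma support_embed {P : Type} (M N : KripkeModel P) (f : M.W → N.W)
    (hR : ∀ w v, M.R w v ↔ N.R (f w) (f v))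
    (hup : ∀ w v, N.R (f w) v → ∃ u, f u = v)
    (hV : ∀ w p, M.V w p ↔ N.V (f w) p)
    (χ : Formula P) : ∀ t : Set M.W, support M χ t ↔ support N χ (f '' t) := by
  induction χ with
  | atom p =>
      intro t
      constructor
      · rintro hs v ⟨w, hw, rfl⟩; exact (hV w p).1 (hs w hw)
      · intro hs w hw; exact (hV w p).2 (hs (f w) ⟨w, hw, rfl⟩)
  | bot =>
      intro t
      simp only [support, Set.image_eq_empty]
  | and α β ih1 ih2 =>
      intro t
      simp only [support, ih1 t, ih2 t]
  | or α β ih1 ih2 =>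
      intro t
      constructor
      · rintro ⟨a, b, rfl, ha, hb⟩
        exact ⟨f '' a, f '' b, by rw [Set.image_union], (ih1 a).1 ha, (ih2 b).1 hb⟩
      · rintro ⟨a, b, hab, ha, hb⟩
        refine ⟨t ∩ f ⁻¹' a, t ∩ f ⁻¹' b, ?_, ?_, ?_⟩
        · ext w
          constructor
          · intro hw
            have : f w ∈ a ∪ b := hab ▸ ⟨w, hw, rfl⟩
            rcases this with h' | h'
            · exact Or.inl ⟨hw, h'⟩
            · exact Or.inr ⟨hw, h'⟩
          · rintro (⟨hw, _⟩ | ⟨hw, _⟩) <;> exact hw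
        · apply (ih1 _).2
          have : f '' (t ∩ f ⁻¹' a) = a := by
            apply Set.Subset.antisymm
            · rintro v ⟨w, ⟨_, hw2⟩, rfl⟩; exact hw2
            · intro v hv
              have : v ∈ f '' t := hab ▸ Or.inl hv
              rcases this with ⟨w, hw, rfl⟩
              exact ⟨w, ⟨hw, hv⟩, rfl⟩
          rw [this]; exact ha
        · apply (ih2 _).2
          have : f '' (t ∩ f ⁻¹' b) = b := by
            apply Set.Subset.antisymm
            · rintro v ⟨w, ⟨_, hw2⟩, rfl⟩; exact hw2
            · intro v hv
              have : v ∈ f '' t := hab ▸ Or.inr hv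
              rcases this with ⟨w, hw, rfl⟩
              exact ⟨w, ⟨hw, hv⟩, rfl⟩
          rw [this]; exact hb
  | impl α β ih1 ih2 =>
      intro t
      constructor
      · intro hs s hsub hα
        -- every element of s is in the range of f
        have hrange : ∀ v ∈ s, ∃ u, f u = v := by
          intro v hv
          rcases hsub hv with ⟨w', ⟨w, hw, rfl⟩, hRw⟩
          exact hup w v hRw
        have himg : f '' (f ⁻¹' s) = s := by
          apply Set.Subset.antisymm
          · rintro v ⟨w, hw, rfl⟩; exact hw
          · intro v hv
            rcases hrange v hv with ⟨u, rfl⟩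
            exact ⟨u, hv, rfl⟩
        have hsub' : f ⁻¹' s ⊆ M.upset t := by
          intro w hw
          rcases hsub hw with ⟨w', ⟨u, hu, rfl⟩, hRw⟩
          rcases hup u (f w) hRw with ⟨u', hu'⟩
          exact ⟨u, hu, (hR u w).2 hRw⟩
        have hα' : support M α (f ⁻¹' s) := by
          apply (ih1 _).2
          rw [himg]; exact hα
        have := (ih2 _).1 (hs (f ⁻¹' s) hsub' hα')
        rwa [himg] at this
      · intro hs s hsub hα
        apply (ih2 s).2
        apply hs (f '' s)
        · rintro v ⟨w, hw, rfl⟩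
          rcases hsub hw with ⟨u, hu, hRu⟩
          exact ⟨f u, ⟨u, hu, rfl⟩, (hR u w).1 hRu⟩
        · exact (ih1 s).1 hα
  | iorr α β ih1 ih2 =>
      intro t
      simp only [support, ih1 t, ih2 t]

/-- If a formula is true at a root (a world below all worlds), it is supported
by every team. -/
lemma support_of_root {P : Type} (N : KripkeModel P) (r : N.W)
    (hroot : ∀ w, N.R r w) (χ : Formula P) :
    support N χ {r} → ∀ t : Set N.W, support N χ t := by
  induction χ with
  | atom p =>
      intro hs t w hw
      exact N.persistent r w p (hroot w) (hs r rfl)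
  | bot =>
      intro hs
      exact absurd (hs ▸ rfl : r ∈ (∅ : Set N.W)) (Set.notMem_empty r)
  | and α β ih1 ih2 =>
      rintro ⟨h1, h2⟩ t
      exact ⟨ih1 h1 t, ih2 h2 t⟩
  | or α β ih1 ih2 =>
      rintro ⟨a, b, hab, ha, hb⟩ t
      have hmem : r ∈ a ∪ b := hab ▸ rfl
      rcases hmem with hr | hr
      · have : a = {r} :=
          Set.Subset.antisymm (hab ▸ Set.subset_union_left)
            (Set.singleton_subset_iff.2 hr)
        exact ⟨t, ∅, by simp, ih1 (this ▸ ha) t, support_empty N β⟩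
      · have : b = {r} :=
          Set.Subset.antisymm (hab ▸ Set.subset_union_right)
            (Set.singleton_subset_iff.2 hr)
        exact ⟨∅, t, by simp, support_empty N α, ih2 (this ▸ hb) t⟩
  | impl α β ih1 ih2 =>
      intro hs t s hsub hα
      apply hs s _ hα
      intro v _
      exact ⟨r, rfl, hroot v⟩
  | iorr α β ih1 ih2 =>
      rintro (h1 | h1) t
      · exact Or.inl (ih1 h1 t)
      · exact Or.inr (ih2 h1 t)

/-- Rooted sum of two models: a fresh root below the disjoint union. -/
def sumModel {P : Type} (M₁ M₂ : KripkeModel P) : KripkeModel P where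
  W := Option (M₁.W ⊕ M₂.W)
  R := fun x y => match x, y with
    | none, _ => True
    | some (Sum.inl w), some (Sum.inl v) => M₁.R w v
    | some (Sum.inr w), some (Sum.inr v) => M₂.R w v
    | _, _ => False
  refl := by rintro (_ | (w | w)) <;> first | trivial | exact M₁.refl w | exact M₂.refl w
  antisymm := by
    rintro (_ | (w | w)) (_ | (v | v)) h1 h2 <;>
      first
        | rfl
        | exact False.elim h1
        | exact False.elim h2
        | exact congrArg (some ∘ Sum.inl) (M₁.antisymm w v h1 h2)
        | exact congrArg (some ∘ Sum.inr) (M₂.antisymm w v h1 h2)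
  trans := by
    rintro (_ | (w | w)) (_ | (v | v)) (_ | (u | u)) h1 h2 <;>
      first
        | trivial
        | exact False.elim h1
        | exact False.elim h2
        | exact M₁.trans w v u h1 h2
        | exact M₂.trans w v u h1 h2
  V := fun x p => match x with
    | none => False
    | some (Sum.inl w) => M₁.V w p
    | some (Sum.inr w) => M₂.V w p
  persistent := by
    rintro (_ | (w | w)) (_ | (v | v)) p h1 h2 <;>
      first
        | exact False.elim h2
        | exact False.elim h1
        | exact M₁.persistent w v p h1 h2
        | exact M₂.persistent w v p h1 h2

/-- disjunction property for ∨: if φ ∨ ψ is valid then φ is valid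
or ψ is valid. -/
theorem disjunction_property_or {P : Type} (φ ψ : Formula P)
    (h : ∀ (M : KripkeModel P) (t : Set M.W), support M (Formula.or φ ψ) t) :
    (∀ (M : KripkeModel P) (t : Set M.W), support M φ t) ∨
    (∀ (M : KripkeModel P) (t : Set M.W), support M ψ t) := by
  by_contra hcon
  push_neg at hcon
  obtain ⟨⟨M₁, t₁, h₁⟩, ⟨M₂, t₂, h₂⟩⟩ := hcon
  set N := sumModel M₁ M₂ with hN
  have hroot : ∀ w : N.W, N.R none w := by
    rintro (_ | (w | w)) <;> trivial
  obtain ⟨a, b, hab, ha, hb⟩ := h N {(none : N.W)}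
  -- embedding lemmas for the two components
  have hemb₁ : ∀ t : Set M₁.W,
      support M₁ φ t ↔ support N φ ((fun w => (some (Sum.inl w) : N.W)) '' t) := by
    apply support_embed
    · intro w v; exact Iff.rfl
    · rintro w (_ | (v | v)) hr
      · exact False.elim hr
      · exact ⟨v, rfl⟩
      · exact False.elim hr
    · intro w p; exact Iff.rfl
  have hemb₂ : ∀ t : Set M₂.W,
      support M₂ ψ t ↔ support N ψ ((fun w => (some (Sum.inr w) : N.W)) '' t) := by
    apply support_embed
    · intro w v; exact Iff.rfl
    · rintro w (_ | (v | v)) hr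
      · exact False.elim hr
      · exact False.elim hr
      · exact ⟨v, rfl⟩
    · intro w p; exact Iff.rfl
  have hmem : (none : N.W) ∈ a ∪ b := hab ▸ rfl
  rcases hmem with hr | hr
  · have haeq : a = {(none : N.W)} :=
      Set.Subset.antisymm (hab ▸ Set.subset_union_left)
        (Set.singleton_subset_iff.2 hr)
    have := support_of_root N none hroot φ (haeq ▸ ha)
      ((fun w => (some (Sum.inl w) : N.W)) '' t₁)
    exact h₁ ((hemb₁ t₁).2 this)
  · have hbeq : b = {(none : N.W)} :=
      Set.Subset.antisymm (hab ▸ Set.subset_union_right)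
        (Set.singleton_subset_iff.2 hr)
    have := support_of_root N none hroot ψ (hbeq ▸ hb)
      ((fun w => (some (Sum.inr w) : N.W)) '' t₂)
    exact h₂ ((hemb₂ t₂).2 this)
end

section
/- Finite model property: if a formula φ of L is not valid in InqI (i.e., there exist an intuitionistic Kripke model M and a team t with M,t ⊭ φ), then there exist a finite intuitionistic Kripke model M' (with finite set of worlds) and a finite team t' such that M',t' ⊭ φ. -/
namespace FMPAux

open Formula

variable {P : Type}

/-- Standard intuitionistic Kripke truth at a world (⩾ treated as ∨; only used
for standard formulas). -/
def ktruth (M : KripkeModel P) : Formula P → M.W → Prop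
  | .atom p, w => M.V w p
  | .bot, _ => False
  | .and a b, w => ktruth M a w ∧ ktruth M b w
  | .or a b, w => ktruth M a w ∨ ktruth M b w
  | .impl a b, w => ∀ v, M.R w v → ktruth M a v → ktruth M b v
  | .iorr a b, w => ktruth M a w ∨ ktruth M b w

theorem ktruth_mono (M : KripkeModel P) (ψ : Formula P) :
    ∀ w v, M.R w v → ktruth M ψ w → ktruth M ψ v := by
  induction ψ with
  | atom p => exact fun w v h hw => M.persistent w v p h hw
  | bot => exact fun w v _ hw => hw
  | and a b iha ihb => exact fun w v h hw => ⟨iha w v h hw.1, ihb w v h hw.2⟩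
  | or a b iha ihb =>
      rintro w v h (hw | hw)
      · exact Or.inl (iha w v h hw)
      · exact Or.inr (ihb w v h hw)
  | impl a b iha ihb =>
      intro w v h hw u hvu hau
      exact hw u (M.trans w v u h hvu) hau
  | iorr a b iha ihb =>
      rintro w v h (hw | hw)
      · exact Or.inl (iha w v h hw)
      · exact Or.inr (ihb w v h hw)

theorem subset_upset (M : KripkeModel P) (t : Set M.W) : t ⊆ M.upset t :=
  fun w hw => ⟨w, hw, M.refl w⟩

theorem upset_mono (M : KripkeModel P) {s t : Set M.W} (h : s ⊆ t) :
    M.upset s ⊆ M.upset t := by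
  rintro v ⟨w, hw, hR⟩; exact ⟨w, h hw, hR⟩

theorem upset_upset (M : KripkeModel P) (t : Set M.W) :
    M.upset (M.upset t) ⊆ M.upset t := by
  rintro v ⟨u, ⟨w, hw, hR1⟩, hR2⟩; exact ⟨w, hw, M.trans w u v hR1 hR2⟩

/-- Persistency of support. -/
theorem support_mono (M : KripkeModel P) (ψ : Formula P) :
    ∀ (t s : Set M.W), support M ψ t → s ⊆ M.upset t → support M ψ s := by
  induction ψ with
  | atom p =>
      intro t s ht hs w hw
      obtain ⟨u, hu, hR⟩ := hs hw
      exact M.persistent u w p hR (ht u hu)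
  | bot =>
      intro t s ht hs
      subst ht
      refine Set.eq_empty_iff_forall_notMem.2 fun w hw => ?_
      obtain ⟨u, hu, -⟩ := hs hw
      exact hu
  | and a b iha ihb =>
      intro t s ht hs
      exact ⟨iha t s ht.1 hs, ihb t s ht.2 hs⟩
  | or a b iha ihb =>
      rintro t s ⟨t₁, t₂, rfl, h1, h2⟩ hs
      refine ⟨s ∩ M.upset t₁, s ∩ M.upset t₂, ?_, iha t₁ _ h1 fun v hv => hv.2,
        ihb t₂ _ h2 fun v hv => hv.2⟩
      apply Set.eq_of_subset_of_subset
      · intro v hv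
        obtain ⟨w, hw, hR⟩ := hs hv
        rcases hw with hw | hw
        · exact Or.inl ⟨hv, w, hw, hR⟩
        · exact Or.inr ⟨hv, w, hw, hR⟩
      · intro v hv
        rcases hv with hv | hv
        · exact hv.1
        · exact hv.1
  | impl a b iha ihb =>
      intro t s ht hs t' ht' ha
      refine ht t' ?_ ha
      intro v hv
      exact upset_upset M t (upset_mono M hs (ht' hv))
  | iorr a b iha ihb =>
      rintro t s (ht | ht) hs
      · exact Or.inl (iha t s ht hs)
      · exact Or.inr (ihb t s ht hs)

/-- Standard formulas are truth-conditional (w.r.t. `ktruth`). -/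
theorem std_truth (M : KripkeModel P) (ψ : Formula P) (hs : ψ.standard) :
    ∀ t : Set M.W, support M ψ t ↔ ∀ w ∈ t, ktruth M ψ w := by
  induction ψ with
  | atom p => intro t; exact Iff.rfl
  | bot =>
      intro t
      constructor
      · rintro rfl w hw; exact hw
      · intro h; exact Set.eq_empty_iff_forall_notMem.2 h
  | and a b iha ihb =>
      intro t
      constructor
      · rintro ⟨h1, h2⟩ w hw
        exact ⟨((iha hs.1 t).1 h1) w hw, ((ihb hs.2 t).1 h2) w hw⟩
      · intro h
        exact ⟨(iha hs.1 t).2 fun w hw => (h w hw).1, (ihb hs.2 t).2 fun w hw => (h w hw).2⟩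
  | or a b iha ihb =>
      intro t
      constructor
      · rintro ⟨t₁, t₂, rfl, h1, h2⟩ w hw
        rcases hw with hw | hw
        · exact Or.inl (((iha hs.1 t₁).1 h1) w hw)
        · exact Or.inr (((ihb hs.2 t₂).1 h2) w hw)
      · intro h
        refine ⟨{w ∈ t | ktruth M a w}, {w ∈ t | ktruth M b w}, ?_,
          (iha hs.1 _).2 fun w hw => hw.2, (ihb hs.2 _).2 fun w hw => hw.2⟩
        apply Set.eq_of_subset_of_subset
        · intro w hw
          rcases h w hw with hk | hk
          · exact Or.inl ⟨hw, hk⟩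
          · exact Or.inr ⟨hw, hk⟩
        · rintro w (hw | hw) <;> exact hw.1
  | impl a b iha ihb =>
      intro t
      constructor
      · intro h w hw v hR hav
        have hv : ({v} : Set M.W) ⊆ M.upset t := by
          rintro x rfl; exact ⟨w, hw, hR⟩
        have := h {v} hv ((iha hs.1 {v}).2 (by rintro x rfl; exact hav))
        exact ((ihb hs.2 {v}).1 this) v rfl
      · intro h t' ht' ha
        refine (ihb hs.2 t').2 fun v hv => ?_
        obtain ⟨w, hw, hR⟩ := ht' hv
        exact h w hw v hR (((iha hs.1 t').1 ha) v hv)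
  | iorr a b iha ihb => exact absurd hs id

/-- Conjunction of a list of formulas (empty list ↦ ⊤ := ⊥ → ⊥). -/
def conjList : List (Formula P) → Formula P
  | [] => .impl .bot .bot
  | a :: l => .and a (conjList l)

theorem support_conjList (M : KripkeModel P) (t : Set M.W) :
    ∀ l : List (Formula P), support M (conjList l) t ↔ ∀ a ∈ l, support M a t := by
  intro l
  induction l with
  | nil =>
      simp only [conjList, List.not_mem_nil, false_implies, implies_true, iff_true]
      intro t' _ h; exact h
  | cons a l ih =>
      simp only [conjList, List.mem_cons]
      constructor
      · rintro ⟨h1, h2⟩ b (rfl | hb)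
        · exact h1
        · exact (ih.1 h2) b hb
      · intro h
        exact ⟨h a (Or.inl rfl), ih.2 fun b hb => h b (Or.inr hb)⟩

theorem conjList_standard : ∀ l : List (Formula P), (∀ a ∈ l, a.standard) →
    (conjList l).standard := by
  intro l
  induction l with
  | nil => exact fun _ => ⟨trivial, trivial⟩
  | cons a l ih =>
      intro h
      exact ⟨h a List.mem_cons_self, ih fun b hb => h b (List.mem_cons_of_mem a hb)⟩

/-- All lists of length `n` with entries from `l`. -/
def picks : ℕ → List (Formula P) → List (List (Formula P))
  | 0, _ => [[]]
  | n + 1, l => l.flatMap fun b => (picks n l).map fun gs => b :: gs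

theorem mem_picks {l : List (Formula P)} :
    ∀ {n : ℕ} {gs : List (Formula P)},
      gs ∈ picks n l ↔ gs.length = n ∧ ∀ b ∈ gs, b ∈ l := by
  intro n
  induction n with
  | zero =>
      intro gs
      simp only [picks, List.mem_singleton]
      constructor
      · rintro rfl; exact ⟨rfl, by simp⟩
      · rintro ⟨h, -⟩; exact List.length_eq_zero_iff.1 h
  | succ n ih =>
      intro gs
      simp only [picks, List.mem_flatMap, List.mem_map]
      constructor
      · rintro ⟨b, hb, gs', hgs', rfl⟩
        obtain ⟨hlen, hmem⟩ := ih.1 hgs'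
        refine ⟨by simp [hlen], ?_⟩
        intro c hc
        rcases List.mem_cons.1 hc with rfl | hc'
        · exact hb
        · exact hmem c hc'
      · rintro ⟨hlen, hmem⟩
        cases gs with
        | nil => simp at hlen
        | cons b gs' =>
            refine ⟨b, hmem b List.mem_cons_self, gs', ih.2 ⟨?_, ?_⟩, rfl⟩
            · simpa using hlen
            · exact fun c hc => hmem c (List.mem_cons_of_mem b hc)

theorem zipWith_map_self {α β : Type} (g : α → α → β) (f : α → α) :
    ∀ l : List α, List.zipWith g l (l.map f) = l.map fun x => g x (f x) := by
  intro l; induction l with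
  | nil => rfl
  | cons a l ih => simp [ih]

theorem zip_find {α₀ : Formula P} :
    ∀ (as gs : List (Formula P)), as.length ≤ gs.length → α₀ ∈ as →
      ∃ β ∈ gs, (Formula.impl α₀ β) ∈ List.zipWith Formula.impl as gs := by
  intro as
  induction as with
  | nil => intro gs _ h; exact absurd h List.not_mem_nil
  | cons a as ih =>
      intro gs hlen hmem
      cases gs with
      | nil => simp at hlen
      | cons g gs =>
          rcases List.mem_cons.1 hmem with rfl | hmem'
          · exact ⟨g, List.mem_cons_self, List.mem_cons_self⟩
          · obtain ⟨β, hβ, hz⟩ := ih gs (by simpa using hlen) hmem'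
            exact ⟨β, List.mem_cons_of_mem g hβ, List.mem_cons_of_mem _ hz⟩

/-- Resolutions of a formula. -/
def res : Formula P → List (Formula P)
  | .atom p => [.atom p]
  | .bot => [.bot]
  | .and a b => (res a).flatMap fun α => (res b).map fun β => Formula.and α β
  | .or a b => (res a).flatMap fun α => (res b).map fun β => Formula.or α β
  | .impl a b => (picks (res a).length (res b)).map fun gs =>
      conjList (List.zipWith Formula.impl (res a) gs)
  | .iorr a b => res a ++ res b

theorem zipWith_impl_standard :
    ∀ (as gs : List (Formula P)), (∀ a ∈ as, a.standard) → (∀ g ∈ gs, g.standard) →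
      ∀ δ ∈ List.zipWith Formula.impl as gs, δ.standard := by
  intro as
  induction as with
  | nil => intro gs _ _ δ hδ; simp at hδ
  | cons x xs ih =>
      intro gs hxs hgs δ hδ
      cases gs with
      | nil => simp at hδ
      | cons g gs' =>
          rcases List.mem_cons.1 hδ with rfl | hδ'
          · exact ⟨hxs x List.mem_cons_self, hgs g List.mem_cons_self⟩
          · exact ih gs' (fun a ha => hxs a (List.mem_cons_of_mem x ha))
              (fun c hc => hgs c (List.mem_cons_of_mem g hc)) δ hδ'

theorem res_standard : ∀ φ : Formula P, ∀ α ∈ res φ, α.standard := by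
  intro φ
  induction φ with
  | atom p => rintro α hα; rcases List.mem_singleton.1 hα with rfl; trivial
  | bot => rintro α hα; rcases List.mem_singleton.1 hα with rfl; trivial
  | and a b iha ihb =>
      intro γ hγ
      simp only [res, List.mem_flatMap, List.mem_map] at hγ
      obtain ⟨α, hα, β, hβ, rfl⟩ := hγ
      exact ⟨iha α hα, ihb β hβ⟩
  | or a b iha ihb =>
      intro γ hγ
      simp only [res, List.mem_flatMap, List.mem_map] at hγ
      obtain ⟨α, hα, β, hβ, rfl⟩ := hγ
      exact ⟨iha α hα, ihb β hβ⟩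
  | impl a b iha ihb =>
      intro γ hγ
      simp only [res, List.mem_map] at hγ
      obtain ⟨gs, hgs, rfl⟩ := hγ
      obtain ⟨-, hmem⟩ := mem_picks.1 hgs
      exact conjList_standard _
        (zipWith_impl_standard (res a) gs iha fun g hg => ihb g (hmem g hg))
  | iorr a b iha ihb =>
      intro γ hγ
      rcases List.mem_append.1 hγ with h | h
      · exact iha γ h
      · exact ihb γ h

/-- The resolution theorem: support of φ amounts to support of some resolution. -/
theorem res_sound : ∀ φ : Formula P, ∀ (M : KripkeModel P) (t : Set M.W),
    support M φ t ↔ ∃ α ∈ res φ, support M α t := by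
  intro φ
  induction φ with
  | atom p => intro M t; simp [res]
  | bot => intro M t; simp [res]
  | and a b iha ihb =>
      intro M t
      constructor
      · rintro ⟨h1, h2⟩
        obtain ⟨α, hα, hsα⟩ := (iha M t).1 h1
        obtain ⟨β, hβ, hsβ⟩ := (ihb M t).1 h2
        refine ⟨Formula.and α β, ?_, hsα, hsβ⟩
        simp only [res, List.mem_flatMap, List.mem_map]
        exact ⟨α, hα, β, hβ, rfl⟩
      · rintro ⟨γ, hγ, hs⟩
        simp only [res, List.mem_flatMap, List.mem_map] at hγ
        obtain ⟨α, hα, β, hβ, rfl⟩ := hγ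
        exact ⟨(iha M t).2 ⟨α, hα, hs.1⟩, (ihb M t).2 ⟨β, hβ, hs.2⟩⟩
  | or a b iha ihb =>
      intro M t
      constructor
      · rintro ⟨t₁, t₂, rfl, h1, h2⟩
        obtain ⟨α, hα, hsα⟩ := (iha M t₁).1 h1
        obtain ⟨β, hβ, hsβ⟩ := (ihb M t₂).1 h2
        refine ⟨Formula.or α β, ?_, t₁, t₂, rfl, hsα, hsβ⟩
        simp only [res, List.mem_flatMap, List.mem_map]
        exact ⟨α, hα, β, hβ, rfl⟩
      · rintro ⟨γ, hγ, hs⟩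
        simp only [res, List.mem_flatMap, List.mem_map] at hγ
        obtain ⟨α, hα, β, hβ, rfl⟩ := hγ
        obtain ⟨t₁, t₂, rfl, hs1, hs2⟩ := hs
        exact ⟨t₁, t₂, rfl, (iha M t₁).2 ⟨α, hα, hs1⟩, (ihb M t₂).2 ⟨β, hβ, hs2⟩⟩
  | impl a b iha ihb =>
      intro M t
      constructor
      · intro h
        have key : ∀ α, ∃ β, α ∈ res a → β ∈ res b ∧ support M (Formula.impl α β) t := by
          intro α
          by_cases hα : α ∈ res a
          · have hstd := res_standard a α hα
            set ts : Set M.W := {v | v ∈ M.upset t ∧ ktruth M α v} with hts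
            have hsub : ts ⊆ M.upset t := fun v hv => hv.1
            have hsα : support M α ts := (std_truth M α hstd ts).2 fun w hw => hw.2
            have hsb : support M b ts := h ts hsub ((iha M ts).2 ⟨α, hα, hsα⟩)
            obtain ⟨β, hβ, hsβ⟩ := (ihb M ts).1 hsb
            refine ⟨β, fun _ => ⟨hβ, ?_⟩⟩
            intro t' ht' hα'
            have ht's : t' ⊆ ts := fun v hv =>
              ⟨ht' hv, ((std_truth M α hstd t').1 hα') v hv⟩
            exact support_mono M β ts t' hsβ fun v hv => ⟨v, ht's hv, M.refl v⟩
          · exact ⟨Formula.bot, fun h' => absurd h' hα⟩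
        choose f hf using key
        refine ⟨conjList (List.zipWith Formula.impl (res a) ((res a).map f)), ?_, ?_⟩
        · simp only [res, List.mem_map]
          refine ⟨(res a).map f, mem_picks.2 ⟨List.length_map _, ?_⟩, rfl⟩
          rintro β hβ
          obtain ⟨α, hα, rfl⟩ := List.mem_map.1 hβ
          exact (hf α hα).1
        · rw [zipWith_map_self]
          refine (support_conjList M t _).2 fun δ hδ => ?_
          obtain ⟨α, hα, rfl⟩ := List.mem_map.1 hδ
          exact (hf α hα).2
      · rintro ⟨γ, hγ, hs⟩
        simp only [res, List.mem_map] at hγ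
        obtain ⟨gs, hgs, rfl⟩ := hγ
        obtain ⟨hlen, hmem⟩ := mem_picks.1 hgs
        intro t' ht' ha'
        obtain ⟨α, hα, hsα⟩ := (iha M t').1 ha'
        obtain ⟨β, hβ, hz⟩ := zip_find (res a) gs (le_of_eq hlen.symm) hα
        have := ((support_conjList M t _).1 hs) _ hz
        exact (ihb M t').2 ⟨β, hmem β hβ, this t' ht' hsα⟩
  | iorr a b iha ihb =>
      intro M t
      constructor
      · rintro (h | h)
        · obtain ⟨α, hα, hs⟩ := (iha M t).1 h
          exact ⟨α, List.mem_append_left _ hα, hs⟩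
        · obtain ⟨α, hα, hs⟩ := (ihb M t).1 h
          exact ⟨α, List.mem_append_right _ hα, hs⟩
      · rintro ⟨α, hα, hs⟩
        rcases List.mem_append.1 hα with h | h
        · exact Or.inl ((iha M t).2 ⟨α, h, hs⟩)
        · exact Or.inr ((ihb M t).2 ⟨α, h, hs⟩)

/-- List of subformulas. -/
def subf : Formula P → List (Formula P)
  | .atom p => [.atom p]
  | .bot => [.bot]
  | .and a b => Formula.and a b :: (subf a ++ subf b)
  | .or a b => Formula.or a b :: (subf a ++ subf b)
  | .impl a b => Formula.impl a b :: (subf a ++ subf b)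
  | .iorr a b => Formula.iorr a b :: (subf a ++ subf b)

theorem subf_self : ∀ ψ : Formula P, ψ ∈ subf ψ := by
  intro ψ; cases ψ <;> simp [subf]

theorem subf_subset : ∀ χ ψ : Formula P, ψ ∈ subf χ → subf ψ ⊆ subf χ := by
  intro χ
  induction χ with
  | atom p =>
      intro ψ hψ; rcases List.mem_singleton.1 hψ with rfl; exact fun x h => h
  | bot =>
      intro ψ hψ; rcases List.mem_singleton.1 hψ with rfl; exact fun x h => h
  | and a b iha ihb =>
      intro ψ hψ
      rcases List.mem_cons.1 hψ with rfl | hψ'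
      · exact fun x h => h
      · rcases List.mem_append.1 hψ' with h | h
        · exact fun x hx => List.mem_cons_of_mem _ (List.mem_append_left _ (iha ψ h hx))
        · exact fun x hx => List.mem_cons_of_mem _ (List.mem_append_right _ (ihb ψ h hx))
  | or a b iha ihb =>
      intro ψ hψ
      rcases List.mem_cons.1 hψ with rfl | hψ'
      · exact fun x h => h
      · rcases List.mem_append.1 hψ' with h | h
        · exact fun x hx => List.mem_cons_of_mem _ (List.mem_append_left _ (iha ψ h hx))
        · exact fun x hx => List.mem_cons_of_mem _ (List.mem_append_right _ (ihb ψ h hx))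
  | impl a b iha ihb =>
      intro ψ hψ
      rcases List.mem_cons.1 hψ with rfl | hψ'
      · exact fun x h => h
      · rcases List.mem_append.1 hψ' with h | h
        · exact fun x hx => List.mem_cons_of_mem _ (List.mem_append_left _ (iha ψ h hx))
        · exact fun x hx => List.mem_cons_of_mem _ (List.mem_append_right _ (ihb ψ h hx))
  | iorr a b iha ihb =>
      intro ψ hψ
      rcases List.mem_cons.1 hψ with rfl | hψ'
      · exact fun x h => h
      · rcases List.mem_append.1 hψ' with h | h
        · exact fun x hx => List.mem_cons_of_mem _ (List.mem_append_left _ (iha ψ h hx))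
        · exact fun x hx => List.mem_cons_of_mem _ (List.mem_append_right _ (ihb ψ h hx))

/-- The type of a world w.r.t. a list of formulas. -/
def wtype (M : KripkeModel P) (L : List (Formula P)) (w : M.W) : Formula P → Prop :=
  fun ψ => ψ ∈ L ∧ ktruth M ψ w

/-- The filtration of M through L. -/
def filt (M : KripkeModel P) (L : List (Formula P)) : KripkeModel P where
  W := {f : Formula P → Prop // ∃ w, f = wtype M L w}
  R f g := ∀ ψ, f.1 ψ → g.1 ψ
  refl := fun f ψ h => h
  antisymm := fun f g h1 h2 =>
    Subtype.ext (funext fun ψ => propext ⟨h1 ψ, h2 ψ⟩)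
  trans := fun f g k h1 h2 ψ h => h2 ψ (h1 ψ h)
  V f p := f.1 (.atom p)
  persistent := fun f g p h hv => h _ hv

theorem filt_finite (M : KripkeModel P) (L : List (Formula P)) :
    Finite (filt M L).W := by
  haveI : Finite {x : Formula P // x ∈ L} := L.finite_toSet.to_subtype
  haveI : Finite ({x : Formula P // x ∈ L} → Prop) := by infer_instance
  refine Finite.of_injective
    (fun f : (filt M L).W => fun x : {x : Formula P // x ∈ L} => f.1 x.1) ?_
  intro f g h
  apply Subtype.ext
  funext ψ
  by_cases hψ : ψ ∈ L
  · exact congrFun h ⟨ψ, hψ⟩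
  · have hf : ¬ f.1 ψ := by
      obtain ⟨w, hw⟩ := f.2
      rw [hw]; exact fun hh => hψ hh.1
    have hg : ¬ g.1 ψ := by
      obtain ⟨v, hv⟩ := g.2
      rw [hv]; exact fun hh => hψ hh.1
    exact propext (iff_of_false hf hg)

/-- Embedding of worlds into the filtration. -/
def emb (M : KripkeModel P) (L : List (Formula P)) (w : M.W) : (filt M L).W :=
  ⟨wtype M L w, w, rfl⟩

theorem filt_truth (M : KripkeModel P) (L : List (Formula P))
    (hcl : ∀ ψ ∈ L, subf ψ ⊆ L) :
    ∀ ψ ∈ L, ∀ w, (ktruth (filt M L) ψ (emb M L w) ↔ ktruth M ψ w) := by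
  intro ψ
  induction ψ with
  | atom p =>
      intro hmem w
      constructor
      · exact fun h => h.2
      · exact fun h => ⟨hmem, h⟩
  | bot => intro _ w; exact Iff.rfl
  | and a b iha ihb =>
      intro hmem w
      have ha : a ∈ L := hcl _ hmem (by
        simp only [subf, List.mem_cons, List.mem_append]
        exact Or.inr (Or.inl (subf_self a)))
      have hb : b ∈ L := hcl _ hmem (by
        simp only [subf, List.mem_cons, List.mem_append]
        exact Or.inr (Or.inr (subf_self b)))
      exact and_congr (iha ha w) (ihb hb w)
  | or a b iha ihb =>
      intro hmem w
      have ha : a ∈ L := hcl _ hmem (by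
        simp only [subf, List.mem_cons, List.mem_append]
        exact Or.inr (Or.inl (subf_self a)))
      have hb : b ∈ L := hcl _ hmem (by
        simp only [subf, List.mem_cons, List.mem_append]
        exact Or.inr (Or.inr (subf_self b)))
      exact or_congr (iha ha w) (ihb hb w)
  | impl a b iha ihb =>
      intro hmem w
      have ha : a ∈ L := hcl _ hmem (by
        simp only [subf, List.mem_cons, List.mem_append]
        exact Or.inr (Or.inl (subf_self a)))
      have hb : b ∈ L := hcl _ hmem (by
        simp only [subf, List.mem_cons, List.mem_append]
        exact Or.inr (Or.inr (subf_self b)))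
      constructor
      · intro h v hR hav
        have hRemb : (filt M L).R (emb M L w) (emb M L v) := by
          intro χ hχ
          exact ⟨hχ.1, ktruth_mono M χ w v hR hχ.2⟩
        exact (ihb hb v).1 (h (emb M L v) hRemb ((iha ha v).2 hav))
      · intro h g hRg hag
        obtain ⟨v, hv⟩ := g.2
        have hg : g = emb M L v := Subtype.ext hv
        subst hg
        have himp : ktruth M (Formula.impl a b) v := by
          have : (wtype M L w) (Formula.impl a b) := ⟨hmem, h⟩
          exact (hRg _ this).2
        exact (ihb hb v).2 (himp v (M.refl v) ((iha ha v).1 hag))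
  | iorr a b iha ihb =>
      intro hmem w
      have ha : a ∈ L := hcl _ hmem (by
        simp only [subf, List.mem_cons, List.mem_append]
        exact Or.inr (Or.inl (subf_self a)))
      have hb : b ∈ L := hcl _ hmem (by
        simp only [subf, List.mem_cons, List.mem_append]
        exact Or.inr (Or.inr (subf_self b)))
      exact or_congr (iha ha w) (ihb hb w)

end FMPAux

/-- finite model property: a formula falsifiable at some team of some
model is falsifiable at a finite team of a finite model. -/
theorem finite_model_property {P : Type} (φ : Formula P)
    (h : ∃ (M : KripkeModel P) (t : Set M.W), ¬ support M φ t) :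
    ∃ (M' : KripkeModel P) (t' : Set M'.W),
      Finite M'.W ∧ t'.Finite ∧ ¬ support M' φ t' := by
  classical
  open FMPAux in
  obtain ⟨M, t, hns⟩ := h
  -- for each resolution α, a world of t where α fails
  have hfail : ∀ α ∈ res φ, ∃ w ∈ t, ¬ ktruth M α w := by
    intro α hα
    have h1 : ¬ support M α t := fun hs => hns ((res_sound φ M t).2 ⟨α, hα, hs⟩)
    have h2 := std_truth M α (res_standard φ α hα) t
    by_contra hc
    push_neg at hc
    exact h1 (h2.2 hc)
  -- the filtration list
  set L : List (Formula P) := (res φ).flatMap subf with hL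
  have hcl : ∀ ψ ∈ L, subf ψ ⊆ L := by
    intro ψ hψ
    obtain ⟨α, hα, hψα⟩ := List.mem_flatMap.1 hψ
    intro χ hχ
    exact List.mem_flatMap.2 ⟨α, hα, subf_subset α ψ hψα hχ⟩
  have hresL : ∀ α ∈ res φ, α ∈ L := fun α hα =>
    List.mem_flatMap.2 ⟨α, hα, subf_self α⟩
  refine ⟨filt M L, (fun w => emb M L w) '' t, filt_finite M L, ?_, ?_⟩
  · haveI := filt_finite M L
    exact Set.toFinite _
  · intro hsup
    obtain ⟨α, hα, hsα⟩ := (res_sound φ (filt M L) _).1 hsup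
    have hstd := res_standard φ α hα
    have htc := (std_truth (filt M L) α hstd _).1 hsα
    obtain ⟨w, hw, hkw⟩ := hfail α hα
    have : ktruth (filt M L) α (emb M L w) := htc _ ⟨w, hw, rfl⟩
    exact hkw ((filt_truth M L hcl α (hresL α hα) w).1 this)
end
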